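/- Under the assumptions of the previous statement, the scalar ODE u̇ = f_c(u) - f_c(u±) - v∗ has a global, strictly decreasing solution u₀ : ℝ → ℝ with u₀(y) → u_ℓ as y → -∞ and u₀(y) → u_r as y → +∞. -/

import Mathlib

open Filter Set intervalIntegral Real Topology

theorem layer_aux (F : ℝ → ℝ) (hF : ContDiff ℝ 1 F) (ur ul : ℝ) (hrl : ur < ul)
    (hFr : F ur = 0) (hFl : F ul = 0) (hneg : ∀ u ∈ Set.Ioo ur ul, F u < 0) :
    ∃ u₀ : ℝ → ℝ, StrictAnti u₀ ∧
      (∀ y, HasDerivAt u₀ (F (u₀ y)) y) ∧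
      Tendsto u₀ atBot (nhds ul) ∧ Tendsto u₀ atTop (nhds ur) := by
  -- Lipschitz bound on F over [ur, ul]
  obtain ⟨C, hC⟩ : ∃ C, ∀ x ∈ Icc ur ul, ‖deriv F x‖ ≤ C :=
    isCompact_Icc.exists_bound_of_continuousOn ((hF.continuous_deriv le_rfl).continuousOn)
  set L : ℝ := max C 1 with hLdef
  have hL : (0:ℝ) < L := lt_of_lt_of_le one_pos (le_max_right _ _)
  have hlip : ∀ x ∈ Icc ur ul, ∀ y ∈ Icc ur ul, ‖F y - F x‖ ≤ L * ‖y - x‖ := by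
    intro x hx y hy
    refine (convex_Icc ur ul).norm_image_sub_le_of_norm_hasDerivWithin_le
      (fun z hz => ((hF.differentiable one_ne_zero z).hasDerivAt).hasDerivWithinAt)
      (fun z hz => le_trans (hC z hz) (le_max_left _ _)) hx hy
  have hbr : ∀ s ∈ Ioo ur ul, -F s ≤ L * (s - ur) := by
    intro s hs
    have := hlip ur ⟨le_rfl, hrl.le⟩ s ⟨hs.1.le, hs.2.le⟩
    rw [hFr, sub_zero] at this
    have h1 : -F s ≤ |F s| := neg_le_abs _
    have h2 : ‖s - ur‖ = s - ur := by
      rw [Real.norm_eq_abs, abs_of_pos (by linarith [hs.1])]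
    calc -F s ≤ ‖F s‖ := neg_le_abs _
      _ ≤ L * ‖s - ur‖ := this
      _ = L * (s - ur) := by rw [h2]
  have hbl : ∀ s ∈ Ioo ur ul, -F s ≤ L * (ul - s) := by
    intro s hs
    have := hlip ul ⟨hrl.le, le_rfl⟩ s ⟨hs.1.le, hs.2.le⟩
    rw [hFl, sub_zero] at this
    have h2 : ‖s - ul‖ = ul - s := by
      rw [Real.norm_eq_abs, abs_of_neg (by linarith [hs.2]), neg_sub]
    calc -F s ≤ ‖F s‖ := neg_le_abs _
      _ ≤ L * ‖s - ul‖ := this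
      _ = L * (ul - s) := by rw [h2]
  have hinvr : ∀ s ∈ Ioo ur ul, (F s)⁻¹ ≤ -(L * (s - ur))⁻¹ := by
    intro s hs
    have hFs : 0 < -F s := neg_pos.2 (hneg s hs)
    have h1 : (L * (s - ur))⁻¹ ≤ (-F s)⁻¹ := inv_anti₀ hFs (hbr s hs)
    rw [inv_neg] at h1
    linarith
  have hinvl : ∀ s ∈ Ioo ur ul, (F s)⁻¹ ≤ -(L * (ul - s))⁻¹ := by
    intro s hs
    have hFs : 0 < -F s := neg_pos.2 (hneg s hs)
    have h1 : (L * (ul - s))⁻¹ ≤ (-F s)⁻¹ := inv_anti₀ hFs (hbl s hs)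
    rw [inv_neg] at h1
    linarith
  set c : ℝ := (ur + ul) / 2 with hcdef
  have hc : c ∈ Ioo ur ul := ⟨by simp only [hcdef]; linarith, by simp only [hcdef]; linarith⟩
  have hFcont : Continuous F := hF.continuous
  have hcontinv : ContinuousOn (fun t => (F t)⁻¹) (Ioo ur ul) :=
    hFcont.continuousOn.inv₀ fun t ht => (hneg t ht).ne
  have hsub : ∀ a ∈ Ioo ur ul, ∀ b ∈ Ioo ur ul, Set.uIcc a b ⊆ Ioo ur ul := by
    intro a ha b hb
    rw [Set.uIcc_eq_union]
    exact Set.union_subset (Set.Icc_subset_Ioo ha.1 hb.2) (Set.Icc_subset_Ioo hb.1 ha.2)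
  have hintg : ∀ a ∈ Ioo ur ul, ∀ b ∈ Ioo ur ul,
      IntervalIntegrable (fun t => (F t)⁻¹) MeasureTheory.volume a b :=
    fun a ha b hb => (hcontinv.mono (hsub a ha b hb)).intervalIntegrable
  set φ : ℝ → ℝ := fun u => ∫ t in c..u, (F t)⁻¹ with hφdef
  have hderivφ : ∀ u ∈ Ioo ur ul, HasDerivAt φ ((F u)⁻¹) u := by
    intro u hu
    exact intervalIntegral.integral_hasDerivAt_right (hintg c hc u hu)
      (hcontinv.stronglyMeasurableAtFilter isOpen_Ioo u hu)
      (hcontinv.continuousAt (isOpen_Ioo.mem_nhds hu))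
  have hφanti : StrictAntiOn φ (Ioo ur ul) := by
    apply strictAntiOn_of_deriv_neg (convex_Ioo ur ul)
      (fun u hu => (hderivφ u hu).continuousAt.continuousWithinAt)
    intro u hu
    rw [interior_Ioo] at hu
    rw [(hderivφ u hu).deriv]
    exact inv_lt_zero.2 (hneg u hu)
  -- comparison integrals
  have hlog_r : ∀ u ∈ Ioo ur c, (∫ t in u..c, -(L * (t - ur))⁻¹)
      = -(L⁻¹ * (Real.log (c - ur) - Real.log (u - ur))) := by
    intro u hu
    have h1 : (fun t => -(L * (t - ur))⁻¹) = fun t => (-L⁻¹) * (t - ur)⁻¹ := by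
      funext t; rw [mul_inv]; ring
    rw [h1, intervalIntegral.integral_const_mul,
      intervalIntegral.integral_comp_sub_right (fun x => x⁻¹) ur,
      integral_inv_of_pos (sub_pos.2 hu.1) (sub_pos.2 hc.1),
      Real.log_div (sub_pos.2 hc.1).ne' (sub_pos.2 hu.1).ne']
    ring
  have hlog_l : ∀ u ∈ Ioo c ul, (∫ t in c..u, -(L * (ul - t))⁻¹)
      = L⁻¹ * (Real.log (ul - u) - Real.log (ul - c)) := by
    intro u hu
    have h1 : (fun t => -(L * (ul - t))⁻¹) = fun t => (-L⁻¹) * (ul - t)⁻¹ := by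
      funext t; rw [mul_inv]; ring
    rw [h1, intervalIntegral.integral_const_mul,
      intervalIntegral.integral_comp_sub_left (fun x => x⁻¹) ul,
      integral_inv_of_pos (sub_pos.2 hu.2) (sub_pos.2 hc.2),
      Real.log_div (sub_pos.2 hc.2).ne' (sub_pos.2 hu.2).ne']
    ring
  have hcont_r : ∀ u ∈ Ioo ur c,
      IntervalIntegrable (fun t => -(L * (t - ur))⁻¹) MeasureTheory.volume u c := by
    intro u hu
    apply ContinuousOn.intervalIntegrable
    apply ContinuousOn.neg
    apply ContinuousOn.inv₀
      ((continuous_const.mul (continuous_id.sub continuous_const)).continuousOn)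
    intro t ht
    rw [Set.uIcc_of_le hu.2.le] at ht
    exact (mul_pos hL (by linarith [lt_of_lt_of_le hu.1 ht.1] : (0:ℝ) < t - ur)).ne'
  have hcont_l : ∀ u ∈ Ioo c ul,
      IntervalIntegrable (fun t => -(L * (ul - t))⁻¹) MeasureTheory.volume c u := by
    intro u hu
    apply ContinuousOn.intervalIntegrable
    apply ContinuousOn.neg
    apply ContinuousOn.inv₀
      ((continuous_const.mul (continuous_const.sub continuous_id)).continuousOn)
    intro t ht
    rw [Set.uIcc_of_le hu.1.le] at ht
    exact (mul_pos hL (by linarith [lt_of_le_of_lt ht.2 hu.2] : (0:ℝ) < ul - t)).ne'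
  have hφ_lb : ∀ u ∈ Ioo ur c, L⁻¹ * (Real.log (c - ur) - Real.log (u - ur)) ≤ φ u := by
    intro u hu
    have huI : u ∈ Ioo ur ul := ⟨hu.1, hu.2.trans hc.2⟩
    have hmono : (∫ t in u..c, (F t)⁻¹) ≤ ∫ t in u..c, -(L * (t - ur))⁻¹ := by
      apply intervalIntegral.integral_mono_on hu.2.le (hintg u huI c hc) (hcont_r u hu)
      intro t ht
      exact hinvr t ⟨lt_of_lt_of_le hu.1 ht.1, lt_of_le_of_lt ht.2 hc.2⟩
    rw [hlog_r u hu] at hmono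
    have hφu : φ u = -∫ t in u..c, (F t)⁻¹ := intervalIntegral.integral_symm u c
    linarith
  have hφ_ub : ∀ u ∈ Ioo c ul, φ u ≤ L⁻¹ * (Real.log (ul - u) - Real.log (ul - c)) := by
    intro u hu
    have huI : u ∈ Ioo ur ul := ⟨hc.1.trans hu.1, hu.2⟩
    have hmono : (∫ t in c..u, (F t)⁻¹) ≤ ∫ t in c..u, -(L * (ul - t))⁻¹ := by
      apply intervalIntegral.integral_mono_on hu.1.le (hintg c hc u huI) (hcont_l u hu)
      intro t ht
      exact hinvl t ⟨lt_of_lt_of_le hc.1 ht.1, lt_of_le_of_lt ht.2 hu.2⟩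
    rw [hlog_l u hu] at hmono
    exact hmono
  -- divergence of φ at the endpoints
  have hshift_r : Tendsto (fun u => u - ur) (𝓝[>] ur) (𝓝[>] (0:ℝ)) := by
    apply tendsto_nhdsWithin_of_tendsto_nhds_of_eventually_within
    · simpa using ((continuous_sub_right ur).tendsto ur).mono_left
        (nhdsWithin_le_nhds : 𝓝[>] ur ≤ 𝓝 ur)
    · filter_upwards [self_mem_nhdsWithin] with u hu
      exact sub_pos.2 (mem_Ioi.1 hu)
  have hshift_l : Tendsto (fun u => ul - u) (𝓝[<] ul) (𝓝[>] (0:ℝ)) := by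
    apply tendsto_nhdsWithin_of_tendsto_nhds_of_eventually_within
    · simpa using ((continuous_sub_left ul : Continuous fun u : ℝ => ul - u).tendsto ul).mono_left
        (nhdsWithin_le_nhds : 𝓝[<] ul ≤ 𝓝 ul)
    · filter_upwards [self_mem_nhdsWithin] with u hu
      exact sub_pos.2 (mem_Iio.1 hu)
  have htop : Tendsto φ (𝓝[>] ur) atTop := by
    apply tendsto_atTop_mono' _ (eventually_of_mem (Ioo_mem_nhdsGT_of_mem ⟨le_rfl, hc.1⟩) hφ_lb)
    apply Tendsto.const_mul_atTop (inv_pos.2 hL)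
    have h2 : Tendsto (fun u => Real.log (u - ur)) (𝓝[>] ur) atBot :=
      Real.tendsto_log_nhdsGT_zero.comp hshift_r
    simpa [sub_eq_add_neg] using
      tendsto_atTop_add_const_left _ (Real.log (c - ur)) (tendsto_neg_atBot_atTop.comp h2)
  have hbot : Tendsto φ (𝓝[<] ul) atBot := by
    apply tendsto_atBot_mono' _ (eventually_of_mem (Ioo_mem_nhdsLT_of_mem ⟨hc.2, le_rfl⟩) hφ_ub)
    apply Tendsto.const_mul_atBot (inv_pos.2 hL)
    have h2 : Tendsto (fun u => Real.log (ul - u)) (𝓝[<] ul) atBot :=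
      Real.tendsto_log_nhdsGT_zero.comp hshift_l
    simpa [sub_eq_add_neg] using
      tendsto_atBot_add_const_right _ (-Real.log (ul - c)) h2
  -- surjectivity of φ : Ioo ur ul → ℝ
  have hsurj : ∀ y : ℝ, ∃ u ∈ Ioo ur ul, φ u = y := by
    intro y
    have ha : ∀ᶠ u in 𝓝[>] ur, y < φ u ∧ u ∈ Ioo ur ul :=
      (htop.eventually_gt_atTop y).and
        (eventually_of_mem (Ioo_mem_nhdsGT_of_mem ⟨le_rfl, hrl⟩) fun u hu => hu)
    obtain ⟨a, hay, haI⟩ := ha.exists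
    have hb : ∀ᶠ u in 𝓝[<] ul, φ u < y ∧ u ∈ Ioo ur ul :=
      (hbot.eventually_lt_atBot y).and
        (eventually_of_mem (Ioo_mem_nhdsLT_of_mem ⟨hrl, le_rfl⟩) fun u hu => hu)
    obtain ⟨b, hby, hbI⟩ := hb.exists
    have hab : a < b := by
      by_contra h
      push_neg at h
      have := hφanti.antitoneOn hbI haI h
      linarith
    have hIcc : Icc a b ⊆ Ioo ur ul := Icc_subset_Ioo haI.1 hbI.2
    have hmem : y ∈ Icc (φ b) (φ a) := ⟨hby.le, hay.le⟩
    obtain ⟨u, huab, huy⟩ := intermediate_value_Icc' hab.le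
      (fun z hz => (hderivφ z (hIcc hz)).continuousAt.continuousWithinAt) hmem
    exact ⟨u, hIcc huab, huy⟩
  -- the inverse function
  choose u₀ hmem hval using hsurj
  have hlt : ∀ u ∈ Ioo ur ul, ∀ y : ℝ, u₀ y < u ↔ φ u < y := by
    intro u hu y
    constructor
    · intro h
      have := hφanti (hmem y) hu h
      rw [hval y] at this
      linarith
    · intro h
      by_contra hcon
      push_neg at hcon
      have := hφanti.antitoneOn hu (hmem y) hcon
      rw [hval y] at this
      linarith
  have hgt : ∀ u ∈ Ioo ur ul, ∀ y : ℝ, u < u₀ y ↔ y < φ u := by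
    intro u hu y
    constructor
    · intro h
      have := hφanti hu (hmem y) h
      rw [hval y] at this
      linarith
    · intro h
      by_contra hcon
      push_neg at hcon
      have := hφanti.antitoneOn (hmem y) hu hcon
      rw [hval y] at this
      linarith
  have hanti : StrictAnti u₀ := by
    intro y1 y2 h12
    rw [hlt (u₀ y1) (hmem y1) y2, hval y1]
    exact h12
  -- continuity of u₀
  have hcont : ∀ y : ℝ, ContinuousAt u₀ y := by
    intro y
    rw [ContinuousAt, tendsto_order]
    constructor
    · intro a ha
      rcases le_or_gt a ur with h | h
      · exact Eventually.of_forall fun z => lt_of_le_of_lt h (hmem z).1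
      · have haI : a ∈ Ioo ur ul := ⟨h, ha.trans (hmem y).2⟩
        have hya : y < φ a := (hgt a haI y).1 ha
        filter_upwards [eventually_lt_nhds hya] with z hz
        exact (hgt a haI z).2 hz
    · intro a ha
      rcases le_or_gt ul a with h | h
      · exact Eventually.of_forall fun z => lt_of_lt_of_le (hmem z).2 h
      · have haI : a ∈ Ioo ur ul := ⟨(hmem y).1.trans ha, h⟩
        have hya : φ a < y := (hlt a haI y).1 ha
        filter_upwards [eventually_gt_nhds hya] with z hz
        exact (hlt a haI z).2 hz
  -- derivative of u₀
  have hderiv : ∀ y : ℝ, HasDerivAt u₀ (F (u₀ y)) y := by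
    intro y
    have h0 : ((F (u₀ y))⁻¹ : ℝ) ≠ 0 := inv_ne_zero (hneg _ (hmem y)).ne
    have h := HasDerivAt.of_local_left_inverse (hcont y) (hderivφ (u₀ y) (hmem y)) h0
      (Eventually.of_forall hval)
    rwa [inv_inv] at h
  -- limits of u₀
  refine ⟨u₀, hanti, hderiv, ?_, ?_⟩
  · rw [tendsto_order]
    constructor
    · intro a ha
      rcases le_or_gt a ur with h | h
      · exact Eventually.of_forall fun z => lt_of_le_of_lt h (hmem z).1
      · obtain ⟨u, hu⟩ : ∃ u, u ∈ Ioo (max a ur) ul := nonempty_Ioo.2 (max_lt ha hrl)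
        have huI : u ∈ Ioo ur ul := ⟨le_max_right a ur |>.trans_lt hu.1, hu.2⟩
        filter_upwards [eventually_lt_atBot (φ u)] with z hz
        exact lt_trans (lt_of_le_of_lt (le_max_left a ur) hu.1) ((hgt u huI z).2 hz)
    · intro a ha
      exact Eventually.of_forall fun z => (hmem z).2.trans ha
  · rw [tendsto_order]
    constructor
    · intro a ha
      exact Eventually.of_forall fun z => ha.trans (hmem z).1
    · intro a ha
      rcases le_or_gt ul a with h | h
      · exact Eventually.of_forall fun z => lt_of_lt_of_le (hmem z).2 h
      · obtain ⟨u, hu⟩ : ∃ u, u ∈ Ioo ur (min a ul) := nonempty_Ioo.2 (lt_min ha hrl)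
        have huI : u ∈ Ioo ur ul := ⟨hu.1, hu.2.trans_le (min_le_right a ul)⟩
        filter_upwards [eventually_gt_atTop (φ u)] with z hz
        exact ((hlt u huI z).2 hz).trans (hu.2.trans_le (min_le_left a ul))


/-- The layer equation `u̇ = f_c(u) - f_c(u±) - v∗` has a global strictly
decreasing heteroclinic solution from `u_ℓ` to `u_r`. -/
theorem layer_heteroclinic (fc : ℝ → ℝ) (hfc : ContDiff ℝ 1 fc)
    (uP uS vS ur ul : ℝ)
    (hrS : ur < uS) (hSl : uS < ul)
    (hzr : fc ur - fc uP - vS = 0)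
    (hzl : fc ul - fc uP - vS = 0)
    (hneg : ∀ u ∈ Set.Ioo ur ul, fc u - fc uP - vS < 0) :
    ∃ u₀ : ℝ → ℝ, StrictAnti u₀ ∧
      (∀ y, HasDerivAt u₀ (fc (u₀ y) - fc uP - vS) y) ∧
      Tendsto u₀ atBot (nhds ul) ∧ Tendsto u₀ atTop (nhds ur) := by
  exact layer_aux (fun u => fc u - fc uP - vS)
    ((hfc.sub contDiff_const).sub contDiff_const) ur ul (hrS.trans hSl) hzr hzl hneg
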